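/- (Finsler's lemma / homogeneous S-lemma with equality constraint.) Let E be a finite-dimensional real inner product space and let A, B be self-adjoint linear endomorphisms of E. Assume B is indefinite, i.e., there exist u, v ∈ E with ⟨B u, u⟩ > 0 and ⟨B v, v⟩ < 0. Then ⟨A x, x⟩ ≥ 0 for every x ∈ E with ⟨B x, x⟩ = 0 if and only if there exists τ ∈ ℝ such that A + τ·B is positive semidefinite. -/

import Mathlib

open scoped RealInnerProductSpace

private lemma finsler_expand {E : Type*} [NormedAddCommGroup E] [InnerProductSpace ℝ E]
    (A : E →ₗ[ℝ] E) (hA : A.IsSymmetric) (a b : ℝ) (x y : E) :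
    ⟪A (a • x + b • y), a • x + b • y⟫ =
      a^2 * ⟪A x, x⟫ + 2*a*b*⟪A x, y⟫ + b^2 * ⟪A y, y⟫ := by
  have h : ⟪A y, x⟫ = ⟪A x, y⟫ := by rw [hA y x, real_inner_comm]
  simp only [map_add, map_smul, inner_add_left, inner_add_right,
    real_inner_smul_left, real_inner_smul_right]
  rw [h]; ring

private lemma finsler_mix {E : Type*} [NormedAddCommGroup E] [InnerProductSpace ℝ E]
    (A B : E →ₗ[ℝ] E) (hA : A.IsSymmetric) (hB : B.IsSymmetric)
    (h : ∀ x : E, ⟪B x, x⟫ = 0 → 0 ≤ ⟪A x, x⟫)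
    {x y : E} (hx : 0 < ⟪B x, x⟫) (hy : ⟪B y, y⟫ < 0) :
    ∃ r : ℝ, 0 < r ∧ r^2 * ⟪B x, x⟫ + 2*r*⟪B x, y⟫ + ⟪B y, y⟫ = 0 ∧
      0 ≤ r^2 * ⟪A x, x⟫ + 2*r*⟪A x, y⟫ + ⟪A y, y⟫ := by
  set gx := ⟪B x, x⟫ with hgx
  set gy := ⟪B y, y⟫ with hgy
  set G := ⟪B x, y⟫ with hG
  have hcont : Continuous (fun t : ℝ => (1-t)^2 * gx + 2*(1-t)*t*G + t^2*gy) := by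
    continuity
  have hiv : (0 : ℝ) ∈ Set.Icc ((fun t : ℝ => (1-t)^2 * gx + 2*(1-t)*t*G + t^2*gy) 1)
      ((fun t : ℝ => (1-t)^2 * gx + 2*(1-t)*t*G + t^2*gy) 0) := by
    constructor <;> simp <;> linarith
  obtain ⟨t, ht, hφt⟩ := intermediate_value_Icc' (by norm_num : (0:ℝ) ≤ 1)
    hcont.continuousOn hiv
  simp only at hφt
  have ht0 : 0 < t := by
    rcases lt_or_eq_of_le ht.1 with h' | h'
    · exact h'
    · exfalso; rw [← h'] at hφt; norm_num at hφt; linarith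
  have ht1 : t < 1 := by
    rcases lt_or_eq_of_le ht.2 with h' | h'
    · exact h'
    · exfalso; rw [h'] at hφt; norm_num at hφt; linarith
  have hne : t ≠ 0 := ne_of_gt ht0
  refine ⟨(1-t)/t, div_pos (by linarith) ht0, ?_, ?_⟩
  · have key : ((1-t)/t)^2 * gx + 2*((1-t)/t)*G + gy
        = ((1-t)^2 * gx + 2*(1-t)*t*G + t^2*gy) / t^2 := by
      field_simp
    rw [key, hφt, zero_div]
  · have hz : ⟪B ((1-t) • x + t • y), (1-t) • x + t • y⟫ = 0 := by
      rw [finsler_expand B hB]; linear_combination hφt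
    have hAz := h _ hz
    rw [finsler_expand A hA] at hAz
    have key : ((1-t)/t)^2 * ⟪A x, x⟫ + 2*((1-t)/t)*⟪A x, y⟫ + ⟪A y, y⟫
        = ((1-t)^2 * ⟪A x, x⟫ + 2*(1-t)*t*⟪A x, y⟫ + t^2 * ⟪A y, y⟫) / t^2 := by
      field_simp
    rw [key]
    exact div_nonneg hAz (by positivity)

private lemma finsler_key {E : Type*} [NormedAddCommGroup E] [InnerProductSpace ℝ E]
    (A B : E →ₗ[ℝ] E) (hA : A.IsSymmetric) (hB : B.IsSymmetric)
    (h : ∀ x : E, ⟪B x, x⟫ = 0 → 0 ≤ ⟪A x, x⟫)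
    {x y : E} (hx : 0 < ⟪B x, x⟫) (hy : ⟪B y, y⟫ < 0) :
    0 ≤ ⟪A y, y⟫ * ⟪B x, x⟫ - ⟪A x, x⟫ * ⟪B y, y⟫ := by
  obtain ⟨r, hr, hr1, hr2⟩ := finsler_mix A B hA hB h hx hy
  have hy' : ⟪B (-y), -y⟫ < 0 := by
    rwa [map_neg, inner_neg_neg]
  obtain ⟨s, hs, hs1, hs2⟩ := finsler_mix A B hA hB h hx hy'
  rw [map_neg, inner_neg_neg, inner_neg_right] at hs1 hs2
  set gx := ⟪B x, x⟫; set gy := ⟪B y, y⟫; set G := ⟪B x, y⟫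
  set fx := ⟪A x, x⟫; set fy := ⟪A y, y⟫; set F := ⟪A x, y⟫
  have hrs0 : (r + s) * (r*s*gx + gy) = 0 := by linear_combination s * hr1 + r * hs1
  have hrspos : (0:ℝ) < r + s := by linarith
  have hprod : r*s*gx + gy = 0 := by
    rcases mul_eq_zero.1 hrs0 with h' | h'
    · exact absurd h' (ne_of_gt hrspos)
    · exact h'
  have hfsum : 0 ≤ (r + s) * (r*s*fx + fy) := by
    have : (r + s) * (r*s*fx + fy)
        = s * (r^2*fx + 2*r*F + fy) + r * (s^2*fx + 2*s*(-F) + fy) := by ring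
    rw [this]
    have h1 : 0 ≤ s * (r^2*fx + 2*r*F + fy) := mul_nonneg hs.le (by linarith)
    have h2 : 0 ≤ r * (s^2*fx + 2*s*(-F) + fy) := mul_nonneg hr.le (by linarith)
    linarith
  have hfin : 0 ≤ r*s*fx + fy := nonneg_of_mul_nonneg_right hfsum hrspos
  have h0 : fx * (r*s*gx + gy) = 0 := by rw [hprod]; ring
  nlinarith [mul_nonneg hfin hx.le, h0]

/-- **Finsler's lemma** (homogeneous S-lemma with equality constraint).
Let `A`, `B` be self-adjoint endomorphisms of a finite-dimensional real inner product
space `E`, with `B` indefinite.  Then `⟪A x, x⟫ ≥ 0` for every `x` with `⟪B x, x⟫ = 0`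
if and only if `A + τ • B` is positive semidefinite for some `τ ∈ ℝ`. -/
theorem finsler_lemma
    {E : Type*} [NormedAddCommGroup E] [InnerProductSpace ℝ E] [FiniteDimensional ℝ E]
    (A B : E →ₗ[ℝ] E) (hA : A.IsSymmetric) (hB : B.IsSymmetric)
    (hBpos : ∃ u : E, 0 < ⟪B u, u⟫) (hBneg : ∃ v : E, ⟪B v, v⟫ < 0) :
    (∀ x : E, ⟪B x, x⟫ = 0 → 0 ≤ ⟪A x, x⟫) ↔
      ∃ τ : ℝ, ∀ x : E, 0 ≤ ⟪(A + τ • B) x, x⟫ := by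
  constructor
  · intro h
    obtain ⟨u, hu⟩ := hBpos
    obtain ⟨v, hv⟩ := hBneg
    set T : Set ℝ := {t : ℝ | ∃ z : E, 0 < ⟪B z, z⟫ ∧ t = -(⟪A z, z⟫ / ⟪B z, z⟫)} with hT
    have hTne : T.Nonempty := ⟨_, u, hu, rfl⟩
    have hbound : ∀ (w : E), ⟪B w, w⟫ < 0 → ∀ t ∈ T, t ≤ ⟪A w, w⟫ / (-⟪B w, w⟫) := by
      intro w hw t ht
      obtain ⟨z, hz, rfl⟩ := ht
      have hkey := finsler_key A B hA hB h hz hw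
      rw [neg_div' , div_le_div_iff₀ hz (by linarith : (0:ℝ) < -⟪B w, w⟫)]
      nlinarith
    have hTbdd : BddAbove T := ⟨_, hbound v hv⟩
    refine ⟨sSup T, fun x => ?_⟩
    simp only [LinearMap.add_apply, LinearMap.smul_apply, inner_add_left,
      real_inner_smul_left]
    rcases lt_trichotomy (⟪B x, x⟫) 0 with hgx | hgx | hgx
    · have hτ : sSup T ≤ ⟪A x, x⟫ / (-⟪B x, x⟫) := csSup_le hTne (hbound x hgx)
      have h2 := mul_le_mul_of_nonpos_right hτ hgx.le
      have h3 : ⟪A x, x⟫ / (-⟪B x, x⟫) * ⟪B x, x⟫ = -⟪A x, x⟫ := by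
        field_simp [ne_of_lt hgx]
      linarith
    · have := h x hgx
      rw [hgx]; linarith
    · have hτ : -(⟪A x, x⟫ / ⟪B x, x⟫) ≤ sSup T := le_csSup hTbdd ⟨x, hgx, rfl⟩
      have h2 := mul_le_mul_of_nonneg_right hτ hgx.le
      have h3 : -(⟪A x, x⟫ / ⟪B x, x⟫) * ⟪B x, x⟫ = -⟪A x, x⟫ := by
        field_simp [ne_of_gt hgx]
      linarith
  · rintro ⟨τ, hτ⟩ x hx
    have := hτ x
    simp only [LinearMap.add_apply, LinearMap.smul_apply, inner_add_left,
      real_inner_smul_left, hx, mul_zero, add_zero] at this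
    exact this
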